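/- For every y ∈ {0,1} and m ∈ {0,1}: if P(Y=y, M=m | X=1) + P(Y=1−y, M=m | X=0) > 1, then the event {ω ∈ Ω : Y1(ω)=y, Y0(ω)=1−y, M1(ω)=m, M0(ω)=m} has positive μ-measure (in particular it is nonempty). -/

import Mathlib

open MeasureTheory ProbabilityTheory
open scoped ENNReal

/-- Conditional probability `P(A | B) = mu(A ∩ B) / mu(B)` as a real number. -/
noncomputable def condP {Ω : Type*} [MeasurableSpace Ω] (μ : Measure Ω)
    (A B : Set Ω) : ℝ :=
  (μ (A ∩ B)).toReal / (μ B).toReal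

theorem statement0
    {Ω : Type*} [MeasurableSpace Ω] (μ : Measure Ω) [IsProbabilityMeasure μ]
    (Y1 Y0 M1 M0 X Y M : Ω → ℕ)
    (hY1meas : Measurable Y1) (hY0meas : Measurable Y0)
    (hM1meas : Measurable M1) (hM0meas : Measurable M0)
    (hXmeas : Measurable X)
    (hY1bin : ∀ ω, Y1 ω ≤ 1) (hY0bin : ∀ ω, Y0 ω ≤ 1)
    (hM1bin : ∀ ω, M1 ω ≤ 1) (hM0bin : ∀ ω, M0 ω ≤ 1)
    (hXbin : ∀ ω, X ω ≤ 1)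
    (hXpos : 0 < μ {ω | X ω = 1}) (hXlt : μ {ω | X ω = 1} < 1)
    (hindep : IndepFun X (fun ω => (Y1 ω, Y0 ω, M1 ω, M0 ω)) μ)
    (hYcons1 : ∀ ω, X ω = 1 → Y ω = Y1 ω)
    (hYcons0 : ∀ ω, X ω = 0 → Y ω = Y0 ω)
    (hMcons1 : ∀ ω, X ω = 1 → M ω = M1 ω)
    (hMcons0 : ∀ ω, X ω = 0 → M ω = M0 ω)
    (y m : ℕ) (hy : y ≤ 1) (hm : m ≤ 1)
    (hemp : condP μ {ω | Y ω = y ∧ M ω = m} {ω | X ω = 1}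
        + condP μ {ω | Y ω = 1 - y ∧ M ω = m} {ω | X ω = 0} > 1) :
    0 < μ {ω | Y1 ω = y ∧ Y0 ω = 1 - y ∧ M1 ω = m ∧ M0 ω = m} ∧
      {ω | Y1 ω = y ∧ Y0 ω = 1 - y ∧ M1 ω = m ∧ M0 ω = m}.Nonempty := by
  classical
  set V : Ω → ℕ × ℕ × ℕ × ℕ := fun ω => (Y1 ω, Y0 ω, M1 ω, M0 ω) with hV
  set A : Set Ω := {ω | Y1 ω = y ∧ M1 ω = m} with hA
  set B : Set Ω := {ω | Y0 ω = 1 - y ∧ M0 ω = m} with hB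
  -- X sets
  have hX1 : {ω | X ω = 1} = X ⁻¹' {1} := rfl
  have hX0 : {ω | X ω = 0} = X ⁻¹' {0} := rfl
  have hX0c : {ω | X ω = 0} = {ω | X ω = 1}ᶜ := by
    ext ω; simp only [Set.mem_setOf_eq, Set.mem_compl_iff]
    have := hXbin ω; omega
  have hX1meas : MeasurableSet {ω | X ω = 1} := hXmeas (measurableSet_singleton 1)
  have hμX0 : μ {ω | X ω = 0} = 1 - μ {ω | X ω = 1} := by
    rw [hX0c, measure_compl hX1meas (measure_ne_top μ _), measure_univ]
  have hX0pos : 0 < μ {ω | X ω = 0} := by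
    rw [hμX0]; exact tsub_pos_of_lt hXlt
  -- A, B as preimages under V
  have hSA : MeasurableSet {p : ℕ × ℕ × ℕ × ℕ | p.1 = y ∧ p.2.2.1 = m} := by
    have h1 : MeasurableSet {p : ℕ × ℕ × ℕ × ℕ | p.1 = y} :=
      measurable_fst (measurableSet_singleton y)
    have h2 : MeasurableSet {p : ℕ × ℕ × ℕ × ℕ | p.2.2.1 = m} :=
      (measurable_fst.comp (measurable_snd.comp measurable_snd))
        (measurableSet_singleton m)
    exact h1.inter h2
  have hSB : MeasurableSet {p : ℕ × ℕ × ℕ × ℕ | p.2.1 = 1 - y ∧ p.2.2.2 = m} := by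
    have h1 : MeasurableSet {p : ℕ × ℕ × ℕ × ℕ | p.2.1 = 1 - y} :=
      (measurable_fst.comp measurable_snd) (measurableSet_singleton (1 - y))
    have h2 : MeasurableSet {p : ℕ × ℕ × ℕ × ℕ | p.2.2.2 = m} :=
      (measurable_snd.comp (measurable_snd.comp measurable_snd))
        (measurableSet_singleton m)
    exact h1.inter h2
  have hApre : A = V ⁻¹' {p | p.1 = y ∧ p.2.2.1 = m} := rfl
  have hBpre : B = V ⁻¹' {p | p.2.1 = 1 - y ∧ p.2.2.2 = m} := rfl
  -- independence products
  have hprod1 : μ (A ∩ {ω | X ω = 1}) = μ {ω | X ω = 1} * μ A := by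
    rw [Set.inter_comm, hApre, hX1]
    exact hindep.measure_inter_preimage_eq_mul _ _ (measurableSet_singleton 1) hSA
  have hprod0 : μ (B ∩ {ω | X ω = 0}) = μ {ω | X ω = 0} * μ B := by
    rw [Set.inter_comm, hBpre, hX0]
    exact hindep.measure_inter_preimage_eq_mul _ _ (measurableSet_singleton 0) hSB
  -- consistency set equalities
  have hE1 : {ω | Y ω = y ∧ M ω = m} ∩ {ω | X ω = 1} = A ∩ {ω | X ω = 1} := by
    ext ω
    simp only [Set.mem_inter_iff, Set.mem_setOf_eq, hA]
    constructor
    · rintro ⟨⟨hy', hm'⟩, hx⟩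
      exact ⟨⟨by rw [← hYcons1 ω hx]; exact hy', by rw [← hMcons1 ω hx]; exact hm'⟩, hx⟩
    · rintro ⟨⟨hy', hm'⟩, hx⟩
      exact ⟨⟨by rw [hYcons1 ω hx]; exact hy', by rw [hMcons1 ω hx]; exact hm'⟩, hx⟩
  have hE0 : {ω | Y ω = 1 - y ∧ M ω = m} ∩ {ω | X ω = 0} = B ∩ {ω | X ω = 0} := by
    ext ω
    simp only [Set.mem_inter_iff, Set.mem_setOf_eq, hB]
    constructor
    · rintro ⟨⟨hy', hm'⟩, hx⟩
      exact ⟨⟨by rw [← hYcons0 ω hx]; exact hy', by rw [← hMcons0 ω hx]; exact hm'⟩, hx⟩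
    · rintro ⟨⟨hy', hm'⟩, hx⟩
      exact ⟨⟨by rw [hYcons0 ω hx]; exact hy', by rw [hMcons0 ω hx]; exact hm'⟩, hx⟩
  -- compute the two conditional probabilities
  have hp1ne : (μ {ω | X ω = 1}).toReal ≠ 0 := by
    rw [ENNReal.toReal_ne_zero]; exact ⟨hXpos.ne', measure_ne_top μ _⟩
  have hp0ne : (μ {ω | X ω = 0}).toReal ≠ 0 := by
    rw [ENNReal.toReal_ne_zero]; exact ⟨hX0pos.ne', measure_ne_top μ _⟩
  have hc1 : condP μ {ω | Y ω = y ∧ M ω = m} {ω | X ω = 1} = (μ A).toReal := by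
    rw [condP, hE1, hprod1, ENNReal.toReal_mul, mul_comm, mul_div_assoc,
      div_self hp1ne, mul_one]
  have hc0 : condP μ {ω | Y ω = 1 - y ∧ M ω = m} {ω | X ω = 0} = (μ B).toReal := by
    rw [condP, hE0, hprod0, ENNReal.toReal_mul, mul_comm, mul_div_assoc,
      div_self hp0ne, mul_one]
  rw [hc1, hc0] at hemp
  -- inclusion-exclusion
  have hVmeas : Measurable V := hY1meas.prodMk (hY0meas.prodMk (hM1meas.prodMk hM0meas))
  have hBmeas : MeasurableSet B := hBpre ▸ hVmeas hSB
  have hABpos : 0 < μ (A ∩ B) := by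
    by_contra h
    push_neg at h
    have hAB0 : μ (A ∩ B) = 0 := le_antisymm h (zero_le)
    have hIE : μ (A ∪ B) + μ (A ∩ B) = μ A + μ B := measure_union_add_inter A hBmeas
    rw [hAB0, add_zero] at hIE
    have hle : μ A + μ B ≤ 1 := hIE ▸ prob_le_one
    have : (μ A).toReal + (μ B).toReal ≤ 1 := by
      rw [← ENNReal.toReal_add (measure_ne_top μ _) (measure_ne_top μ _)]
      calc (μ A + μ B).toReal ≤ (1 : ℝ≥0∞).toReal :=
            ENNReal.toReal_mono ENNReal.one_ne_top hle
        _ = 1 := by simp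
    linarith
  have hset : {ω | Y1 ω = y ∧ Y0 ω = 1 - y ∧ M1 ω = m ∧ M0 ω = m} = A ∩ B := by
    ext ω
    simp only [Set.mem_inter_iff, Set.mem_setOf_eq, hA, hB]
    tauto
  rw [hset]
  exact ⟨hABpos, nonempty_of_measure_ne_zero hABpos.ne'⟩
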